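/- Let σ > 0 and define U(n,u) = Φ(u + σ n^{−1/2}/2)/Φ(u) for u ≥ 0, where Φ is the standard normal CDF. Then there exists a constant C > 0 such that for all n ≥ 1 and all u ∈ [0,∞), |U(n,u) − 1 − σ n^{−1/2} φ(u)/(2Φ(u))| ≤ C/n, where φ is the standard normal density. -/

import Mathlib

open Real

/-- The standard normal cumulative distribution function. -/
noncomputable def stdNormalCDF (u : ℝ) : ℝ :=
  ∫ x in Set.Iic u, Real.exp (-x ^ 2 / 2) / Real.sqrt (2 * π)

/-- The standard normal density. -/
noncomputable def stdNormalPDF (u : ℝ) : ℝ :=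
  Real.exp (-u ^ 2 / 2) / Real.sqrt (2 * π)


open Real MeasureTheory Set

lemma pdf_eq (x : ℝ) : stdNormalPDF x = Real.exp (-(1/2) * x ^ 2) / Real.sqrt (2 * π) := by
  unfold stdNormalPDF; ring_nf

lemma pdf_pos (x : ℝ) : 0 < stdNormalPDF x :=
  div_pos (Real.exp_pos _) (Real.sqrt_pos.mpr (by positivity))

lemma pdf_integrable : Integrable stdNormalPDF := by
  have : Integrable (fun x : ℝ => Real.exp (-(1/2) * x ^ 2) / Real.sqrt (2 * π)) :=
    (integrable_exp_neg_mul_sq (by norm_num)).div_const _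
  exact this.congr (by filter_upwards with x using (pdf_eq x).symm)

lemma pdf_continuous : Continuous stdNormalPDF := by
  unfold stdNormalPDF
  fun_prop

lemma cdf_eq (u : ℝ) : stdNormalCDF u = ∫ x in Iic u, stdNormalPDF x := rfl

lemma cdf_sub (a b : ℝ) : stdNormalCDF b - stdNormalCDF a = ∫ x in a..b, stdNormalPDF x := by
  rw [cdf_eq, cdf_eq]
  exact intervalIntegral.integral_Iic_sub_Iic pdf_integrable.integrableOn pdf_integrable.integrableOn

lemma cdf_zero : stdNormalCDF 0 = 1 / 2 := by
  have hint : ∫ x : ℝ, stdNormalPDF x = 1 := by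
    have h1 : ∫ x : ℝ, Real.exp (-(1/2) * x ^ 2) = Real.sqrt (2 * π) := by
      rw [integral_gaussian]
      rw [show (2:ℝ) * π = π / (1/2) by ring]
    have : ∫ x : ℝ, stdNormalPDF x = (∫ x : ℝ, Real.exp (-(1/2) * x ^ 2)) / Real.sqrt (2 * π) := by
      rw [← integral_div]
      exact integral_congr_ae (by filter_upwards with x using pdf_eq x)
    rw [this, h1, div_self (by positivity)]
  have hsymm : (∫ x in Iic (0:ℝ), stdNormalPDF x) = ∫ x in Ioi (0:ℝ), stdNormalPDF x := by
    rw [show (Ioi (0:ℝ)) = Ioi (-(0:ℝ)) by norm_num, ← integral_comp_neg_Iic]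
    refine setIntegral_congr_fun measurableSet_Iic fun x _ => ?_
    unfold stdNormalPDF; ring_nf
  have := intervalIntegral.integral_Iic_add_Ioi (b := (0:ℝ)) pdf_integrable.integrableOn pdf_integrable.integrableOn
  rw [hint, ← hsymm] at this
  rw [cdf_eq]; linarith

lemma cdf_ge_half {u : ℝ} (hu : 0 ≤ u) : 1 / 2 ≤ stdNormalCDF u := by
  have h := cdf_sub 0 u
  rw [cdf_zero] at h
  have : 0 ≤ ∫ x in (0:ℝ)..u, stdNormalPDF x :=
    intervalIntegral.integral_nonneg hu fun x _ => (pdf_pos x).le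
  linarith

lemma hasDerivAt_cdf (u : ℝ) : HasDerivAt stdNormalCDF (stdNormalPDF u) u := by
  have key : ∀ v : ℝ, stdNormalCDF v = stdNormalCDF 0 + ∫ x in (0:ℝ)..v, stdNormalPDF x := by
    intro v; have := cdf_sub 0 v; linarith
  have : HasDerivAt (fun v => stdNormalCDF 0 + ∫ x in (0:ℝ)..v, stdNormalPDF x)
      (stdNormalPDF u) u := by
    refine HasDerivAt.const_add _ ?_
    exact intervalIntegral.integral_hasDerivAt_right
      (pdf_integrable.intervalIntegrable) (pdf_continuous.stronglyMeasurableAtFilter _ _)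
      pdf_continuous.continuousAt
  exact this.congr_of_eventuallyEq (by filter_upwards with v using (key v))

lemma hasDerivAt_pdf (x : ℝ) : HasDerivAt stdNormalPDF (-x * stdNormalPDF x) x := by
  have h1 : HasDerivAt (fun x : ℝ => -x ^ 2 / 2) (-x) x := by
    have := ((hasDerivAt_pow 2 x).neg).div_const 2
    simpa using this.congr_deriv (by ring)
  have h2 := (h1.exp).div_const (Real.sqrt (2 * π))
  unfold stdNormalPDF
  refine h2.congr_deriv ?_
  ring

lemma pdf_deriv_bound (x : ℝ) : ‖-x * stdNormalPDF x‖ ≤ 1 / 2 := by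
  have hexp : |x| ≤ Real.exp (x ^ 2 / 2) := by
    have h1 : x ^ 2 / 2 + 1 ≤ Real.exp (x ^ 2 / 2) := Real.add_one_le_exp _
    nlinarith [sq_nonneg (|x| - 1), sq_abs x]
  have h1 : |x| * Real.exp (-x ^ 2 / 2) ≤ 1 := by
    rw [show -x ^ 2 / 2 = -(x ^ 2 / 2) by ring, Real.exp_neg, mul_inv_le_iff₀ (Real.exp_pos _),
      one_mul]
    exact hexp
  have hs : (2 : ℝ) ≤ Real.sqrt (2 * π) := by
    nlinarith [Real.sq_sqrt (show (0:ℝ) ≤ 2 * π by positivity), Real.sqrt_nonneg (2 * π),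
      Real.pi_gt_three]
  have hδ : 0 < Real.sqrt (2 * π) := by linarith
  rw [norm_mul, norm_neg, Real.norm_eq_abs, Real.norm_eq_abs]
  unfold stdNormalPDF
  rw [abs_div, abs_of_pos (Real.exp_pos _), abs_of_pos hδ, ← mul_div_assoc]
  rw [div_le_iff₀ hδ]
  nlinarith

theorem U_expansion_uniform (σ : ℝ) (hσ : 0 < σ) :
    ∃ C > 0, ∀ n : ℕ, 1 ≤ n → ∀ u : ℝ, 0 ≤ u →
      |stdNormalCDF (u + σ * (Real.sqrt n)⁻¹ / 2) / stdNormalCDF u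
          - 1 - σ * (Real.sqrt n)⁻¹ * stdNormalPDF u / (2 * stdNormalCDF u)|
        ≤ C / n := by
  refine ⟨σ ^ 2 / 4, by positivity, fun n hn u hu => ?_⟩
  have hn0 : (0:ℝ) < n := by exact_mod_cast hn
  have hsn : 0 < Real.sqrt n := Real.sqrt_pos.mpr hn0
  set h : ℝ := σ * (Real.sqrt n)⁻¹ / 2 with hh
  have hhpos : 0 < h := by positivity
  have hΦ : (1:ℝ)/2 ≤ stdNormalCDF u := cdf_ge_half hu
  have hΦpos : 0 < stdNormalCDF u := by linarith
  have lip : ∀ a b : ℝ, ‖stdNormalPDF b - stdNormalPDF a‖ ≤ 1/2 * ‖b - a‖ := fun a b =>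
    Convex.norm_image_sub_le_of_norm_hasDerivWithin_le
      (f' := fun x => -x * stdNormalPDF x)
      (fun x _ => (hasDerivAt_pdf x).hasDerivWithinAt)
      (fun x _ => pdf_deriv_bound x) convex_univ (Set.mem_univ a) (Set.mem_univ b)
  set g : ℝ → ℝ := fun t => stdNormalCDF (u + t) - stdNormalCDF u - t * stdNormalPDF u with hg
  have hg' : ∀ t : ℝ, HasDerivAt g (stdNormalPDF (u + t) - stdNormalPDF u) t := by
    intro t
    have h1 : HasDerivAt (fun t : ℝ => stdNormalCDF (u + t)) (stdNormalPDF (u + t)) t := by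
      have := (hasDerivAt_cdf (u + t)).comp t ((hasDerivAt_id t).const_add u)
      rw [mul_one] at this; exact this
    have := (h1.sub_const (stdNormalCDF u)).sub
      ((hasDerivAt_id t).mul_const (stdNormalPDF u))
    rw [one_mul] at this; exact this
  have gbound : ‖g h - g 0‖ ≤ h/2 * ‖h - 0‖ := by
    refine Convex.norm_image_sub_le_of_norm_hasDerivWithin_le
      (f' := fun t => stdNormalPDF (u + t) - stdNormalPDF u)
      (fun t _ => (hg' t).hasDerivWithinAt) (fun t ht => ?_) (convex_Icc 0 h)
      (Set.left_mem_Icc.mpr hhpos.le) (Set.right_mem_Icc.mpr hhpos.le)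
    calc ‖stdNormalPDF (u + t) - stdNormalPDF u‖ ≤ 1/2 * ‖(u + t) - u‖ := lip u (u + t)
      _ = 1/2 * |t| := by rw [show (u + t) - u = t by ring, Real.norm_eq_abs]
      _ ≤ h/2 := by rw [abs_of_nonneg ht.1]; linarith [ht.2]
  have g0 : g 0 = 0 := by simp [hg]
  rw [g0, sub_zero, sub_zero, Real.norm_eq_abs] at gbound
  have gb : |g h| ≤ h ^ 2 / 2 := by
    rw [Real.norm_eq_abs, abs_of_nonneg hhpos.le] at gbound; nlinarith
  have key : stdNormalCDF (u + h) / stdNormalCDF u - 1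
      - σ * (Real.sqrt n)⁻¹ * stdNormalPDF u / (2 * stdNormalCDF u) = g h / stdNormalCDF u := by
    have h2 : σ * (Real.sqrt n)⁻¹ = 2 * h := by rw [hh]; ring
    rw [hg, h2]
    field_simp
  have hsq : h ^ 2 = σ ^ 2 / 4 / n := by
    rw [hh]
    have : ((Real.sqrt n)⁻¹) ^ 2 = (n : ℝ)⁻¹ := by
      rw [← Real.sq_sqrt hn0.le]; field_simp; rw [Real.sqrt_sq hsn.le]
    field_simp
    nlinarith [Real.sq_sqrt hn0.le]
  rw [key, abs_div, abs_of_pos hΦpos, div_le_iff₀ hΦpos]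
  calc |g h| ≤ h ^ 2 / 2 := gb
    _ ≤ (σ ^ 2 / 4 / n) * (1/2) := by rw [hsq]; ring_nf; rfl
    _ ≤ (σ ^ 2 / 4 / n) * stdNormalCDF u := by
        apply mul_le_mul_of_nonneg_left (by linarith) (by positivity)
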